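/- Define A(z) := (1 − 4z²)^{−1/2} and B(z) := −2·A(z)·arcsin(2z) as real-analytic functions on (−1/2, 1/2). Then the Taylor coefficients of A at 0 are integers, and the n-th Taylor coefficient of B at 0, multiplied by lcm(1, 2, ..., n), is an integer for every n ≥ 1. -/

import Mathlib

/-- `A(z) = (1 − 4z²)^{−1/2}`. -/
noncomputable def Afun (z : ℝ) : ℝ := (1 - 4 * z ^ 2) ^ (-(1 : ℝ) / 2)

/-- `B(z) = −2 A(z) arcsin(2z)`. -/
noncomputable def Bfun (z : ℝ) : ℝ := -2 * Afun z * Real.arcsin (2 * z)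

namespace Stmt7Aux

open Set Finset Real

def S : Set ℝ := Set.Ioo (-(1/2)) (1/2)
lemma hS : IsOpen S := isOpen_Ioo
lemma hU : UniqueDiffOn ℝ S := hS.uniqueDiffOn
lemma h0 : (0:ℝ) ∈ S := by constructor <;> norm_num
lemma hpos {x : ℝ} (hx : x ∈ S) : 0 < 1 - 4 * x ^ 2 := by
  obtain ⟨h1, h2⟩ := hx; nlinarith
lemma smoothA (m : ℕ) : ContDiffOn ℝ m Afun S := by
  intro x hx
  have hbase : ContDiffAt ℝ m (fun z : ℝ => 1 - 4 * z ^ 2) x :=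
    contDiffAt_const.sub (contDiffAt_const.mul (contDiffAt_id.pow 2))
  exact (hbase.rpow_const_of_ne (hpos hx).ne').contDiffWithinAt
lemma hasDerivA {x : ℝ} (hx : x ∈ S) :
    HasDerivAt Afun (4 * x * (1 - 4 * x ^ 2) ^ (-(3:ℝ)/2)) x := by
  have hinner : HasDerivAt (fun z : ℝ => 1 - 4 * z ^ 2) (-(8 * x)) x := by
    have h := ((hasDerivAt_pow 2 x).const_mul (4:ℝ)).const_sub 1
    refine h.congr_deriv ?_
    push_cast; ring
  have h := hinner.rpow_const (p := -(1:ℝ)/2) (Or.inl (hpos hx).ne')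
  refine h.congr_deriv ?_
  rw [show (-(1:ℝ)/2 - 1) = -(3:ℝ)/2 by norm_num]
  ring

-- new part
lemma keyA {x : ℝ} (hx : x ∈ S) :
    deriv Afun x = 0 + (4*(x * Afun x) + 4*(x*(x* deriv Afun x))) := by
  set t := 1 - 4 * x ^ 2 with ht
  have htpos : 0 < t := hpos hx
  have hD := (hasDerivA hx).deriv
  have hd : (4 * x * t ^ (-(3:ℝ)/2)) * t = 4 * x * Afun x := by
    have h1 : t ^ (-(3:ℝ)/2) * t = t ^ (-(1:ℝ)/2) := by
      nth_rewrite 2 [show t = t ^ (1:ℝ) from (Real.rpow_one t).symm]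
      rw [← Real.rpow_add htpos]; norm_num
    rw [Afun, ← ht]
    calc 4 * x * t ^ (-(3:ℝ)/2) * t = 4 * x * (t ^ (-(3:ℝ)/2) * t) := by ring
    _ = 4 * x * t ^ (-(1:ℝ)/2) := by rw [h1]
  rw [hD]
  linear_combination hd

lemma h2x {x : ℝ} (hx : x ∈ S) : 2 * x ≠ -1 ∧ 2 * x ≠ 1 := by
  obtain ⟨h1, h2⟩ := hx
  constructor <;> intro h <;> [skip; skip] <;> nlinarith [h1, h2, h]

lemma smoothB (m : ℕ) : ContDiffOn ℝ m Bfun S := by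
  intro x hx
  have harc : ContDiffAt ℝ m (fun z : ℝ => Real.arcsin (2*z)) x := by
    have h1 := Real.contDiffAt_arcsin (h2x hx).1 (h2x hx).2 (n := m)
    exact h1.comp x (contDiffAt_const.mul contDiffAt_id)
  have hA : ContDiffAt ℝ m Afun x := by
    have hbase : ContDiffAt ℝ m (fun z : ℝ => 1 - 4 * z ^ 2) x :=
      contDiffAt_const.sub (contDiffAt_const.mul (contDiffAt_id.pow 2))
    exact hbase.rpow_const_of_ne (hpos hx).ne'
  exact ((contDiffAt_const.mul hA).mul harc).contDiffWithinAt

lemma hasDerivB {x : ℝ} (hx : x ∈ S) :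
    HasDerivAt Bfun
      ((-2 * (4 * x * (1 - 4 * x ^ 2) ^ (-(3:ℝ)/2))) * Real.arcsin (2*x)
        + (-2 * Afun x) * (1 / Real.sqrt (1 - (2*x)^2) * 2)) x := by
  have harc : HasDerivAt (fun z : ℝ => Real.arcsin (2*z)) (1 / Real.sqrt (1 - (2*x)^2) * 2) x := by
    have h1 := Real.hasDerivAt_arcsin (h2x hx).1 (h2x hx).2
    have h2 : HasDerivAt (fun z : ℝ => 2 * z) 2 x := by
      simpa using (hasDerivAt_id x).const_mul (2:ℝ)
    exact h1.comp x h2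
  exact ((hasDerivA hx).const_mul (-2)).mul harc

lemma keyB {x : ℝ} (hx : x ∈ S) :
    deriv Bfun x = -4 + (4*(x * Bfun x) + 4*(x*(x* deriv Bfun x))) := by
  set t := 1 - 4 * x ^ 2 with ht
  have htpos : 0 < t := hpos hx
  have hsqt : Real.sqrt t ≠ 0 := Real.sqrt_ne_zero'.2 htpos
  have hteq : 1 - (2*x)^2 = t := by rw [ht]; ring
  have hD := (hasDerivB hx).deriv
  rw [hteq] at hD
  have hd : (4 * x * t ^ (-(3:ℝ)/2)) * t = 4 * x * Afun x := by
    have h1 : t ^ (-(3:ℝ)/2) * t = t ^ (-(1:ℝ)/2) := by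
      nth_rewrite 2 [show t = t ^ (1:ℝ) from (Real.rpow_one t).symm]
      rw [← Real.rpow_add htpos]; norm_num
    rw [Afun, ← ht]
    calc 4 * x * t ^ (-(3:ℝ)/2) * t = 4 * x * (t ^ (-(3:ℝ)/2) * t) := by ring
    _ = 4 * x * t ^ (-(1:ℝ)/2) := by rw [h1]
  have ha : Afun x * Real.sqrt t = 1 := by
    rw [Afun, ← ht, Real.sqrt_eq_rpow, ← Real.rpow_add htpos]
    norm_num
  have hst : Real.sqrt t * Real.sqrt t = t := Real.mul_self_sqrt htpos.le
  have hmain : deriv Bfun x * t = 4 * x * Bfun x - 4 := by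
    rw [hD, Bfun, ← ht]
    have hexp : -2 * (4 * x * t ^ (-(3:ℝ)/2)) * arcsin (2*x) * t
        = -2 * (4 * x * Afun x) * arcsin (2*x) := by
      calc -2 * (4 * x * t ^ (-(3:ℝ)/2)) * arcsin (2*x) * t
          = -2 * arcsin (2*x) * (4 * x * t ^ (-(3:ℝ)/2) * t) := by ring
        _ = -2 * arcsin (2*x) * (4 * x * Afun x) := by rw [hd]
        _ = -2 * (4 * x * Afun x) * arcsin (2*x) := by ring
    have hexp2 : (-2 * Afun x * (1 / Real.sqrt t * 2)) * t = -4 := by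
      calc (-2 * Afun x * (1 / Real.sqrt t * 2)) * t = -4 * Afun x * (t / Real.sqrt t) := by
            ring
        _ = -4 * Afun x * Real.sqrt t := by rw [Real.div_sqrt]
        _ = -4 * (Afun x * Real.sqrt t) := by ring
        _ = -4 := by rw [ha]; ring
    calc (-2 * (4 * x * t ^ (-(3:ℝ)/2)) * arcsin (2*x) + -2 * Afun x * (1 / √t * 2)) * t
        = -2 * (4 * x * t ^ (-(3:ℝ)/2)) * arcsin (2*x) * t
          + (-2 * Afun x * (1 / √t * 2)) * t := by ring
      _ = -2 * (4 * x * Afun x) * arcsin (2*x) + -4 := by rw [hexp, hexp2]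
      _ = 4 * x * (-2 * Afun x * arcsin (2 * x)) - 4 := by ring
  linear_combination hmain

lemma diffAtIter {f : ℝ → ℝ} (hf : ∀ m : ℕ, ContDiffOn ℝ m f S) (k : ℕ) {y : ℝ} (hy : y ∈ S) :
    DifferentiableAt ℝ (iteratedDerivWithin k f S) y :=
  (((hf (k+1)).differentiableOn_iteratedDerivWithin (by exact_mod_cast k.lt_succ_self) hU) y
    hy).differentiableAt (hS.mem_nhds hy)

lemma DmulX {f : ℝ → ℝ} (hf : ∀ m : ℕ, ContDiffOn ℝ m f S) :
    ∀ n : ℕ, ∀ x ∈ S, iteratedDerivWithin (n+1) (fun z => z * f z) S x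
      = x * iteratedDerivWithin (n+1) f S x + ((n : ℝ) + 1) * iteratedDerivWithin n f S x := by
  intro n
  induction n with
  | zero =>
    intro x hx
    have hfd : DifferentiableAt ℝ f x := by
      have := diffAtIter hf 0 hx
      rwa [iteratedDerivWithin_zero] at this
    rw [iteratedDerivWithin_one, derivWithin_of_isOpen hS hx,
      deriv_fun_mul differentiableAt_fun_id hfd]
    rw [iteratedDerivWithin_one, derivWithin_of_isOpen hS hx,
      iteratedDerivWithin_zero]
    simp
    ring
  | succ n IH =>
    intro x hx
    rw [iteratedDerivWithin_succ,
      derivWithin_congr (fun y hy => IH y hy) (IH x hx),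
      derivWithin_of_isOpen hS hx]
    have h1 : HasDerivAt (fun y => y * iteratedDerivWithin (n+1) f S y)
        (1 * iteratedDerivWithin (n+1) f S x + x * deriv (iteratedDerivWithin (n+1) f S) x) x :=
      (hasDerivAt_id x).mul (diffAtIter hf (n+1) hx).hasDerivAt
    have h2 : HasDerivAt (fun y => ((n : ℝ) + 1) * iteratedDerivWithin n f S y)
        (((n : ℝ) + 1) * deriv (iteratedDerivWithin n f S) x) x :=
      (diffAtIter hf n hx).hasDerivAt.const_mul _
    rw [(h1.fun_add h2).deriv]
    have e1 : deriv (iteratedDerivWithin (n+1) f S) x = iteratedDerivWithin (n+2) f S x := by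
      rw [← derivWithin_of_isOpen hS hx, ← iteratedDerivWithin_succ]
    have e2 : deriv (iteratedDerivWithin n f S) x = iteratedDerivWithin (n+1) f S x := by
      rw [← derivWithin_of_isOpen hS hx, ← iteratedDerivWithin_succ]
    rw [e1, e2]
    push_cast
    ring

lemma step1 {f : ℝ → ℝ} (k : ℕ) :
    iteratedDerivWithin (k+1) f S 0 = iteratedDerivWithin k (deriv f) S 0 := by
  rw [iteratedDerivWithin_succ']
  exact iteratedDerivWithin_congr (fun y hy => derivWithin_of_isOpen hS hy) h0

lemma master {f : ℝ → ℝ} (hf : ∀ m : ℕ, ContDiffOn ℝ m f S) (c : ℝ)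
    (hode : ∀ x ∈ S, deriv f x = c + (4*(x * f x) + 4*(x*(x* deriv f x)))) (n : ℕ) :
    iteratedDerivWithin (n+2) f S 0 = 4*((n:ℝ)+1)^2 * iteratedDerivWithin n f S 0 := by
  have hdf : ∀ m : ℕ, ContDiffOn ℝ m (deriv f) S := by
    intro m
    have := (hf (m+1)).deriv_of_isOpen hS (n := (m+1 : ℕ)) (m := (m : ℕ∞))
    exact this (by exact_mod_cast le_refl (m+1))
  have hg1 : ∀ m : ℕ, ContDiffOn ℝ m (fun z => z * f z) S := fun m =>
    contDiffOn_id.mul (hf m)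
  have hg2 : ∀ m : ℕ, ContDiffOn ℝ m (fun z : ℝ => z * (z * deriv f z)) S := fun m =>
    contDiffOn_id.mul (contDiffOn_id.mul (hdf m))
  have e0 : iteratedDerivWithin (n+2) f S 0 = iteratedDerivWithin (n+1) (deriv f) S 0 :=
    step1 (n+1)
  have e1 : iteratedDerivWithin (n+1) (deriv f) S 0
      = iteratedDerivWithin (n+1) (fun z => c + (4*(z * f z) + 4*(z*(z* deriv f z)))) S 0 :=
    iteratedDerivWithin_congr (fun y hy => hode y hy) h0
  have e2 : iteratedDerivWithin (n+1) (fun z => c + (4*(z * f z) + 4*(z*(z* deriv f z)))) S 0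
      = iteratedDerivWithin (n+1) (fun z => 4*(z * f z) + 4*(z*(z* deriv f z))) S 0 :=
    iteratedDerivWithin_const_add (Nat.succ_pos n) c
  have e3 : iteratedDerivWithin (n+1) (fun z => 4*(z * f z) + 4*(z*(z* deriv f z))) S 0
      = iteratedDerivWithin (n+1) (fun z => 4*(z * f z)) S 0
        + iteratedDerivWithin (n+1) (fun z => 4*(z*(z* deriv f z))) S 0 := by
    have := iteratedDerivWithin_fun_add (n := n+1) h0 hU
      (f := fun z => 4*(z * f z)) (g := fun z => 4*(z*(z* deriv f z)))
      (((hg1 (n+1)).const_smul (4:ℝ) |>.congr (fun y _ => by simp [smul_eq_mul])) 0 h0)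
      (((hg2 (n+1)).const_smul (4:ℝ) |>.congr (fun y _ => by simp [smul_eq_mul])) 0 h0)
    simpa using this
  have e4 : iteratedDerivWithin (n+1) (fun z => 4*(z * f z)) S 0
      = 4 * iteratedDerivWithin (n+1) (fun z => z * f z) S 0 :=
    iteratedDerivWithin_const_mul h0 hU 4 (hg1 (n+1) 0 h0)
  have e5 : iteratedDerivWithin (n+1) (fun z => 4*(z*(z* deriv f z))) S 0
      = 4 * iteratedDerivWithin (n+1) (fun z => z*(z* deriv f z)) S 0 :=
    iteratedDerivWithin_const_mul h0 hU 4 ((hg2 (n+1)) 0 h0)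
  have e6 : iteratedDerivWithin (n+1) (fun z => z * f z) S 0
      = ((n : ℝ) + 1) * iteratedDerivWithin n f S 0 := by
    rw [DmulX hf n 0 h0]; ring
  have hzf' : ∀ m : ℕ, ContDiffOn ℝ m (fun z : ℝ => z * deriv f z) S := fun m =>
    contDiffOn_id.mul (hdf m)
  have e7 : iteratedDerivWithin (n+1) (fun z => z*(z* deriv f z)) S 0
      = ((n : ℝ) + 1) * iteratedDerivWithin n (fun z : ℝ => z * deriv f z) S 0 := by
    rw [DmulX hzf' n 0 h0]; ring
  have e8 : iteratedDerivWithin n (fun z : ℝ => z * deriv f z) S 0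
      = (n : ℝ) * iteratedDerivWithin n f S 0 := by
    cases n with
    | zero => rw [iteratedDerivWithin_zero]; simp
    | succ m =>
      rw [DmulX hdf m 0 h0, ← step1 m, ← step1 (m+1)]
      push_cast
      ring
  rw [e0, e1, e2, e3, e4, e5, e6, e7, e8]
  ring


lemma aval0 : Afun 0 = 1 := by
  rw [Afun]
  norm_num

lemma aval1 : deriv Afun 0 = 0 := by
  rw [(hasDerivA h0).deriv]
  ring

lemma bval0 : Bfun 0 = 0 := by
  rw [Bfun]
  simp [Real.arcsin_zero]

lemma bval1 : deriv Bfun 0 = -4 := by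
  rw [(hasDerivB h0).deriv]
  simp [aval0, Real.arcsin_zero]
  norm_num

lemma conv (f : ℝ → ℝ) (n : ℕ) : iteratedDeriv n f 0 = iteratedDerivWithin n f S 0 := by
  rw [iteratedDeriv_eq_iteratedFDeriv, iteratedDerivWithin_eq_iteratedFDerivWithin,
    iteratedFDerivWithin_of_isOpen n hS h0]

lemma d0 (f : ℝ → ℝ) : iteratedDerivWithin 0 f S 0 = f 0 := by
  rw [iteratedDerivWithin_zero]

lemma d1 (f : ℝ → ℝ) : iteratedDerivWithin 1 f S 0 = deriv f 0 := by
  rw [iteratedDerivWithin_one, derivWithin_of_isOpen hS h0]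

lemma Aclosed : ∀ k : ℕ,
    iteratedDerivWithin (2*k) Afun S 0 = ((2*k).factorial : ℝ) * (Nat.centralBinom k : ℝ)
    ∧ iteratedDerivWithin (2*k+1) Afun S 0 = 0 := by
  intro k
  induction k with
  | zero =>
    constructor
    · rw [show 2*0 = 0 by ring, d0, aval0]; simp [Nat.centralBinom]
    · rw [show 2*0+1 = 1 by ring, d1, aval1]
  | succ k IH =>
    obtain ⟨IH1, IH2⟩ := IH
    constructor
    · rw [show 2*(k+1) = 2*k+2 by ring, master smoothA 0 (fun x hx => keyA hx) (2*k), IH1]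
      have hc := Nat.succ_mul_centralBinom_succ k
      have hc' : ((k:ℝ)+1) * (Nat.centralBinom (k+1) : ℝ)
          = 2 * (2*(k:ℝ)+1) * (Nat.centralBinom k : ℝ) := by exact_mod_cast hc
      rw [show 2*k+2 = (2*k+1)+1 by ring, Nat.factorial_succ, Nat.factorial_succ]
      push_cast
      linear_combination (-2*(2*(k:ℝ)+1)*((2*k).factorial : ℝ)) * hc'
    · rw [show 2*(k+1)+1 = (2*k+1)+2 by ring,
        master smoothA 0 (fun x hx => keyA hx) (2*k+1), IH2]
      ring

lemma Bclosed : ∀ k : ℕ,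
    iteratedDerivWithin (2*k) Bfun S 0 = 0
    ∧ iteratedDerivWithin (2*k+1) Bfun S 0 = -4 * 16^k * ((k.factorial : ℝ))^2 := by
  intro k
  induction k with
  | zero =>
    constructor
    · rw [show 2*0 = 0 by ring, d0, bval0]
    · rw [show 2*0+1 = 1 by ring, d1, bval1]; simp
  | succ k IH =>
    obtain ⟨IH1, IH2⟩ := IH
    constructor
    · rw [show 2*(k+1) = 2*k+2 by ring, master smoothB (-4) (fun x hx => keyB hx) (2*k), IH1]
      ring
    · rw [show 2*(k+1)+1 = (2*k+1)+2 by ring,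
        master smoothB (-4) (fun x hx => keyB hx) (2*k+1), IH2, Nat.factorial_succ]
      push_cast
      ring


lemma pfrac : ∀ (m : ℕ) (x : ℝ), 0 < x →
    ∑ i ∈ Finset.range (m+1), (-1:ℝ)^i * (m.choose i : ℝ) / (x + i)
      = (m.factorial : ℝ) / ∏ i ∈ Finset.range (m+1), (x + i) := by
  intro m
  induction m with
  | zero => intro x hx; simp
  | succ m IH =>
    intro x hx
    have hx1 : (0:ℝ) < x + 1 := by linarith
    have hposy : ∀ y : ℝ, 0 < y → (0:ℝ) < ∏ i ∈ Finset.range (m+1), (y + i) := by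
      intro y hy
      exact Finset.prod_pos fun i _ => by positivity
    have hsum : ∑ i ∈ Finset.range (m+2), (-1:ℝ)^i * ((m+1).choose i : ℝ) / (x + i)
        = (∑ i ∈ Finset.range (m+1), (-1:ℝ)^i * (m.choose i : ℝ) / (x + i))
          - ∑ i ∈ Finset.range (m+1), (-1:ℝ)^i * (m.choose i : ℝ) / ((x+1) + i) := by
      rw [Finset.sum_range_succ']
      have hterm : ∀ i ∈ Finset.range (m+1),
          (-1:ℝ)^(i+1) * (((m+1).choose (i+1) : ℕ) : ℝ) / (x + ↑(i+1))
          = (-1:ℝ)^(i+1) * ((m.choose (i+1) : ℕ) : ℝ) / (x + ↑(i+1))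
            - (-1:ℝ)^i * ((m.choose i : ℕ) : ℝ) / ((x+1) + i) := by
        intro i _
        have hne1 : x + ((i:ℝ)+1) ≠ 0 := by positivity
        have hne2 : (x+1) + (i:ℝ) ≠ 0 := by positivity
        rw [Nat.choose_succ_succ']
        push_cast
        field_simp
        ring
      rw [Finset.sum_congr rfl hterm, Finset.sum_sub_distrib]
      have hA : (∑ i ∈ Finset.range (m+1),
            (-1:ℝ)^(i+1) * ((m.choose (i+1) : ℕ) : ℝ) / (x + ↑(i+1)))
            + (-1:ℝ)^0 * ((m.choose 0 : ℕ) : ℝ) / (x + ((0:ℕ):ℝ))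
          = ∑ i ∈ Finset.range (m+1), (-1:ℝ)^i * (m.choose i : ℝ) / (x + i) := by
        rw [← Finset.sum_range_succ' (fun i => (-1:ℝ)^i * (m.choose i : ℝ) / (x + i)) (m+1),
          Finset.sum_range_succ]
        simp [Nat.choose_succ_self]
      have hg0 : (-1:ℝ)^0 * (((m+1).choose 0 : ℕ) : ℝ) / (x + ((0:ℕ):ℝ))
          = (-1:ℝ)^0 * ((m.choose 0 : ℕ) : ℝ) / (x + ((0:ℕ):ℝ)) := by simp
      rw [hg0]
      linarith [hA]
    rw [hsum, IH x hx, IH (x+1) hx1]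
    have hQ1 : ∏ i ∈ Finset.range (m+2), (x + (i:ℝ))
        = (∏ i ∈ Finset.range (m+1), (x + (i:ℝ))) * (x + ((m:ℝ)+1)) := by
      rw [Finset.prod_range_succ]
      push_cast
      ring
    have hQ2 : ∏ i ∈ Finset.range (m+2), (x + (i:ℝ))
        = x * ∏ i ∈ Finset.range (m+1), ((x+1) + (i:ℝ)) := by
      rw [Finset.prod_range_succ' (fun i => x + (i:ℝ)) (m+1),
        Finset.prod_congr rfl (fun i (_ : i ∈ Finset.range (m+1)) =>
          show x + ((i+1 : ℕ):ℝ) = (x+1) + (i:ℝ) by push_cast; ring)]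
      norm_num
      ring
    have hP1 : (∏ i ∈ Finset.range (m+1), (x + (i:ℝ))) ≠ 0 := (hposy x hx).ne'
    have hP2 : (∏ i ∈ Finset.range (m+1), ((x+1) + (i:ℝ))) ≠ 0 := (hposy (x+1) hx1).ne'
    have hrel : x * ∏ i ∈ Finset.range (m+1), ((x+1) + (i:ℝ))
        = (∏ i ∈ Finset.range (m+1), (x + (i:ℝ))) * (x + ((m:ℝ)+1)) := hQ2.symm.trans hQ1
    have hxm : x + ((m:ℝ)+1) ≠ 0 := by positivity
    rw [hQ1, Nat.factorial_succ]
    push_cast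
    have e1 : (m.factorial:ℝ) / (∏ i ∈ Finset.range (m+1), (x + (i:ℝ)))
        = (m.factorial * (x+((m:ℝ)+1))) /
          ((∏ i ∈ Finset.range (m+1), (x + (i:ℝ))) * (x+((m:ℝ)+1))) := by
      rw [mul_div_mul_right _ _ hxm]
    have e2 : (m.factorial:ℝ) / (∏ i ∈ Finset.range (m+1), ((x+1) + (i:ℝ)))
        = (m.factorial * x) /
          ((∏ i ∈ Finset.range (m+1), (x + (i:ℝ))) * (x+((m:ℝ)+1))) := by
      rw [← hrel, mul_comm x (∏ i ∈ Finset.range (m+1), ((x+1) + (i:ℝ))),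
        mul_div_mul_right _ _ hx.ne']
    rw [e1, e2, div_sub_div_same]
    congr 1
    ring

lemma factprod (k : ℕ) : ∀ j : ℕ,
    (k.factorial : ℝ) * ∏ i ∈ Finset.range j, ((k:ℝ)+1+(i:ℝ)) = ((k+j).factorial : ℝ) := by
  intro j
  induction j with
  | zero => simp
  | succ j IH =>
    rw [Finset.prod_range_succ, ← mul_assoc, IH, show k + (j+1) = (k+j)+1 by ring,
      Nat.factorial_succ]
    push_cast
    ring

end Stmt7Aux

/-- **Denominator types of `A` and `B`:** the Taylor coefficients of
`A(z) = (1−4z²)^{−1/2}` at `0` are integers, and `lcm(1,…,n)` times the `n`-th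
Taylor coefficient of `B(z) = −2A(z)arcsin(2z)` at `0` is an integer for `n ≥ 1`. -/
theorem stmt_7 :
    (∀ n : ℕ, ∃ a : ℤ, iteratedDeriv n Afun 0 / n.factorial = (a : ℝ)) ∧
    (∀ n : ℕ, 1 ≤ n → ∃ b : ℤ,
      ((Finset.Icc 1 n).lcm id : ℕ) * (iteratedDeriv n Bfun 0 / n.factorial) = (b : ℝ)) := by
  open Stmt7Aux in
  constructor
  · intro n
    rcases Nat.even_or_odd n with ⟨k, hk⟩ | ⟨k, hk⟩
    · refine ⟨Nat.centralBinom k, ?_⟩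
      rw [conv, show n = 2*k by omega, (Aclosed k).1]
      have hne : ((2*k).factorial : ℝ) ≠ 0 := Nat.cast_ne_zero.2 (Nat.factorial_ne_zero _)
      field_simp
      norm_cast
    · refine ⟨0, ?_⟩
      rw [conv, show n = 2*k+1 by omega, (Aclosed k).2]
      simp
  · intro n hn
    rcases Nat.even_or_odd n with ⟨k, hk⟩ | ⟨k, hk⟩
    · refine ⟨0, ?_⟩
      rw [conv, show n = 2*k by omega, (Bclosed k).1]
      simp
    · have hn2 : n = 2*k+1 := by omega
      set L : ℕ := (Finset.Icc 1 n).lcm id with hL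
      have hdvd : ∀ i, i ≤ k → (k+1+i) ∣ L := by
        intro i hi
        have hmem : (k+1+i) ∈ Finset.Icc 1 n := by
          rw [Finset.mem_Icc]
          omega
        simpa using Finset.dvd_lcm (f := id) hmem
      obtain ⟨q, hq⟩ : ∃ q : ℕ → ℕ, ∀ i, q i = L / (k+1+i) := ⟨_, fun i => rfl⟩
      refine ⟨-4 * 16^k * ∑ i ∈ Finset.range (k+1),
        (-1:ℤ)^i * (k.choose i : ℤ) * (q i : ℤ), ?_⟩
      rw [conv, hn2, (Bclosed k).2]
      have hcastdiv : ∀ i ∈ Finset.range (k+1),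
          (-1:ℝ)^i * (k.choose i : ℝ) * ((q i : ℕ) : ℝ)
          = (-1:ℝ)^i * (k.choose i : ℝ) * ((L:ℝ) / (((k:ℝ)+1) + (i:ℝ))) := by
        intro i hi
        have hi' : i ≤ k := by simpa [Nat.lt_succ_iff] using hi
        have h1 : ((q i : ℕ):ℝ) * (((k:ℝ)+1) + (i:ℝ)) = (L:ℝ) := by
          have h2 := Nat.div_mul_cancel (hdvd i hi')
          rw [hq i]
          exact_mod_cast h2
        congr 1
        rw [eq_div_iff (by positivity)]
        exact h1
      have hp : (0:ℝ) < (k:ℝ)+1 := by positivity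
      have hpf := pfrac k ((k:ℝ)+1) hp
      have hfp := factprod k (k+1)
      have hPpos : (0:ℝ) < ∏ i ∈ Finset.range (k+1), (((k:ℝ)+1) + (i:ℝ)) :=
        Finset.prod_pos fun i _ => by positivity
      have hkf : ((k.factorial : ℕ) : ℝ) ≠ 0 := Nat.cast_ne_zero.2 (Nat.factorial_ne_zero _)
      have hcastb : ((-4 * 16^k * ∑ i ∈ Finset.range (k+1),
            (-1:ℤ)^i * (k.choose i : ℤ) * (q i : ℤ) : ℤ) : ℝ)
          = -4 * 16^k * ∑ i ∈ Finset.range (k+1),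
            (-1:ℝ)^i * (k.choose i : ℝ) * ((q i : ℕ) : ℝ) := by
        push_cast
        ring
      rw [hcastb, Finset.sum_congr rfl hcastdiv]
      have hsum2 : ∑ i ∈ Finset.range (k+1),
          (-1:ℝ)^i * (k.choose i : ℝ) * ((L:ℝ) / (((k:ℝ)+1) + (i:ℝ)))
          = (L:ℝ) * ∑ i ∈ Finset.range (k+1),
              (-1:ℝ)^i * (k.choose i : ℝ) / (((k:ℝ)+1) + (i:ℝ)) := by
        rw [Finset.mul_sum]
        exact Finset.sum_congr rfl fun i _ => by ring
      rw [hsum2, hpf, show 2*k+1 = k + (k+1) by ring, ← hfp]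
      field_simp
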